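/- Let G be a finite simple graph and a, b two nonadjacent vertices of G with S_{a,b} ≠ ∅. Every edge e' of G with φ_G(e') < k_min((a,b)) is unaffected by inserting the edge (a,b): φ_{G+(a,b)}(e') = φ_G(e'). -/

import Mathlib

open SimpleGraph

variable {V : Type*}

/-- `H` is a `k`-truss of `G`: a connected subgraph with at least one edge in which
every edge lies in at least `k - 2` triangles of `H` (i.e. the endpoints of every edge
have at least `k - 2` common neighbors in `H`). -/
def IsTruss (G : SimpleGraph V) (k : ℕ) (H : G.Subgraph) : Prop :=
  H.Connected ∧ H.edgeSet.Nonempty ∧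
    ∀ a b : V, H.Adj a b → k - 2 ≤ {c : V | H.Adj a c ∧ H.Adj b c}.ncard

/-- The truss number `φ_G(e)` of an edge `e`: the largest `k` such that `e` lies in some
`k`-truss of `G`. -/
noncomputable def trussNumber (G : SimpleGraph V) (e : Sym2 V) : ℕ :=
  sSup {k : ℕ | ∃ H : G.Subgraph, IsTruss G k H ∧ e ∈ H.edgeSet}

/-- The support of the edge `(a, b)` in a subgraph `H`: the number of triangles of `H`
containing it, i.e. the number of common neighbors of `a` and `b` in `H`. -/
noncomputable def suppIn {G : SimpleGraph V} (H : G.Subgraph) (a b : V) : ℕ :=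
  {c : V | H.Adj a c ∧ H.Adj b c}.ncard

/-- The support of the edge `(a, b)` in `G`. -/
noncomputable def suppG (G : SimpleGraph V) (a b : V) : ℕ :=
  {c : V | G.Adj a c ∧ G.Adj b c}.ncard

/-- `S_{a,b}`: the common neighbors of `a` and `b` in `G`. -/
def commonNbrs (G : SimpleGraph V) (a b : V) : Set V :=
  {c : V | G.Adj a c ∧ G.Adj b c}

/-- `E_{S_{a,b} ↔ {a,b}}`: the edges of `G` joining a common neighbor of `a` and `b`
to `a` or to `b`. -/
def sideEdges (G : SimpleGraph V) (a b : V) : Set (Sym2 V) :=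
  {e | ∃ c, G.Adj a c ∧ G.Adj b c ∧ (e = s(a, c) ∨ e = s(b, c))}

/-- `k_min((a,b))`: minimum truss number among the edges of `E_{S_{a,b} ↔ {a,b}}`. -/
noncomputable def kmin (G : SimpleGraph V) (a b : V) : ℕ :=
  sInf (trussNumber G '' sideEdges G a b)

/-- `k_max((a,b))`: maximum truss number among the edges of `E_{S_{a,b} ↔ {a,b}}`. -/
noncomputable def kmax (G : SimpleGraph V) (a b : V) : ℕ :=
  sSup (trussNumber G '' sideEdges G a b)

/-- `G + (a,b)`: the graph obtained from `G` by inserting the edge `(a, b)`. -/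
def insertEdge (G : SimpleGraph V) (a b : V) : SimpleGraph V :=
  G ⊔ fromEdgeSet {s(a, b)}

namespace TrussAux

/-- Transport a subgraph along an adjacency implication between ambient graphs. -/
def trans {G G' : SimpleGraph V} (H : G.Subgraph) (h : ∀ x y, H.Adj x y → G'.Adj x y) :
    G'.Subgraph where
  verts := H.verts
  Adj := H.Adj
  adj_sub := fun hxy => h _ _ hxy
  edge_vert := fun hxy => H.edge_vert hxy
  symm := H.symm

@[simp] lemma trans_adj {G G' : SimpleGraph V} (H : G.Subgraph) (h) (x y : V) :
    (trans (G' := G') H h).Adj x y ↔ H.Adj x y := Iff.rfl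

@[simp] lemma trans_verts {G G' : SimpleGraph V} (H : G.Subgraph) (h) :
    (trans (G' := G') H h).verts = H.verts := rfl

@[simp] lemma trans_edgeSet {G G' : SimpleGraph V} (H : G.Subgraph) (h) :
    (trans (G' := G') H h).edgeSet = H.edgeSet := rfl

lemma trans_connected {G G' : SimpleGraph V} (H : G.Subgraph) (h) (hc : H.Connected) :
    (trans (G' := G') H h).Connected := by
  rw [SimpleGraph.Subgraph.connected_iff'] at hc ⊢
  exact hc

lemma trans_isTruss {G G' : SimpleGraph V} {k : ℕ} (H : G.Subgraph) (h) (ht : IsTruss G k H) :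
    IsTruss G' k (trans (G' := G') H h) :=
  ⟨trans_connected H h ht.1, ht.2.1, ht.2.2⟩

lemma trussSet_bddAbove [Fintype V] (G : SimpleGraph V) (e : Sym2 V) :
    BddAbove {k : ℕ | ∃ H : G.Subgraph, IsTruss G k H ∧ e ∈ H.edgeSet} := by
  refine ⟨Fintype.card V + 2, ?_⟩
  rintro k ⟨H, ⟨-, hne, hsupp⟩, -⟩
  obtain ⟨e0, he0⟩ := hne
  obtain ⟨x, y, hadj⟩ : ∃ x y, H.Adj x y := Sym2.ind (fun x y h => ⟨x, y, h⟩) e0 he0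
  have h1 := hsupp x y hadj
  have h2 : {c : V | H.Adj x c ∧ H.Adj y c}.ncard ≤ Fintype.card V := by
    calc {c : V | H.Adj x c ∧ H.Adj y c}.ncard
        ≤ (Set.univ : Set V).ncard := Set.ncard_le_ncard (Set.subset_univ _) (Set.toFinite _)
      _ = Fintype.card V := by rw [Set.ncard_univ, Nat.card_eq_fintype_card]
  omega

lemma two_mem_trussSet (G : SimpleGraph V) {e : Sym2 V} (he : e ∈ G.edgeSet) :
    2 ∈ {k : ℕ | ∃ H : G.Subgraph, IsTruss G k H ∧ e ∈ H.edgeSet} := by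
  revert he
  refine Sym2.ind (fun x y he => ?_) e
  exact ⟨G.subgraphOfAdj he,
    ⟨SimpleGraph.Subgraph.subgraphOfAdj_connected he, ⟨s(x, y), by simp; exact rfl⟩, fun _ _ _ => by simp⟩,
    by simp; exact rfl⟩

lemma two_le_trussNumber [Fintype V] {G : SimpleGraph V} {e : Sym2 V} (he : e ∈ G.edgeSet) :
    2 ≤ trussNumber G e :=
  le_csSup (trussSet_bddAbove G e) (two_mem_trussSet G he)

lemma exists_truss [Fintype V] {G : SimpleGraph V} {e : Sym2 V} (he : e ∈ G.edgeSet) :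
    ∃ H : G.Subgraph, IsTruss G (trussNumber G e) H ∧ e ∈ H.edgeSet :=
  Nat.sSup_mem ⟨2, two_mem_trussSet G he⟩ (trussSet_bddAbove G e)

lemma isTruss_mono_k {G : SimpleGraph V} {k m : ℕ} {H : G.Subgraph} (h : m ≤ k)
    (ht : IsTruss G k H) : IsTruss G m H :=
  ⟨ht.1, ht.2.1, fun x y hxy => le_trans (Nat.sub_le_sub_right h 2) (ht.2.2 x y hxy)⟩

lemma trussNumber_mono [Fintype V] {G G' : SimpleGraph V} (h : G ≤ G') {e : Sym2 V}
    (he : e ∈ G.edgeSet) : trussNumber G e ≤ trussNumber G' e := by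
  refine csSup_le_csSup (trussSet_bddAbove G' e) ⟨2, two_mem_trussSet G he⟩ ?_
  rintro k ⟨H, ht, hm⟩
  exact ⟨trans H (fun x y hxy => h (H.adj_sub hxy)), trans_isTruss H _ ht, hm⟩

lemma walk_transfer {G G' : SimpleGraph V} {H' : G'.Subgraph} {B : G.Subgraph}
    (hv : H'.verts ⊆ B.verts)
    (he : ∀ x y, H'.Adj x y → ∃ q : G.Walk x y, q.toSubgraph ≤ B) :
    ∀ {u v : V} (p : G'.Walk u v), p.toSubgraph ≤ H' → ∃ q : G.Walk u v, q.toSubgraph ≤ B := by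
  intro u v p
  induction p with
  | nil =>
    intro hp
    simp only [SimpleGraph.Walk.toSubgraph] at hp
    rw [SimpleGraph.singletonSubgraph_le_iff] at hp
    refine ⟨.nil, ?_⟩
    simp only [SimpleGraph.Walk.toSubgraph]
    rw [SimpleGraph.singletonSubgraph_le_iff]
    exact hv hp
  | @cons u1 x1 w1 hadj p ih =>
    intro hp
    simp only [SimpleGraph.Walk.toSubgraph] at hp
    have h1 : G'.subgraphOfAdj hadj ≤ H' := le_trans le_sup_left hp
    have h2 := le_trans le_sup_right hp
    have hadj' : H'.Adj u1 x1 := h1.2 rfl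
    obtain ⟨q1, hq1⟩ := he _ _ hadj'
    obtain ⟨q2, hq2⟩ := ih h2
    exact ⟨q1.append q2, by rw [SimpleGraph.Walk.toSubgraph_append]; exact sup_le hq1 hq2⟩

end TrussAux

theorem stmt16 [Fintype V] (G : SimpleGraph V) (a b : V) (hab : a ≠ b)
    (hnadj : ¬ G.Adj a b) (hS : (commonNbrs G a b).Nonempty)
    (e' : Sym2 V) (he' : e' ∈ G.edgeSet)
    (h : trussNumber G e' < kmin G a b) :
    trussNumber (insertEdge G a b) e' = trussNumber G e' := by
  classical
  set G' := insertEdge G a b with hG'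
  have hGle : G ≤ G' := le_sup_left
  have hG'adj : ∀ x y : V, G'.Adj x y ↔ G.Adj x y ∨ (s(x, y) = s(a, b) ∧ x ≠ y) := by
    intro x y
    simp [hG', insertEdge, SimpleGraph.fromEdgeSet_adj]
  have he'G' : e' ∈ G'.edgeSet := SimpleGraph.edgeSet_mono hGle he'
  refine le_antisymm ?_ (TrussAux.trussNumber_mono hGle he')
  set t := trussNumber G e' with htdef
  have ht2 : 2 ≤ t := TrussAux.two_le_trussNumber he'
  show sSup {k : ℕ | ∃ H : G'.Subgraph, IsTruss G' k H ∧ e' ∈ H.edgeSet} ≤ t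
  refine csSup_le ⟨2, TrussAux.two_mem_trussSet G' he'G'⟩ ?_
  rintro k ⟨H', hT', heH'⟩
  by_cases hab' : H'.Adj a b
  swap
  · have hdesc : ∀ x y, H'.Adj x y → G.Adj x y := by
      intro x y hxy
      rcases (hG'adj x y).1 (H'.adj_sub hxy) with hg | ⟨heq, -⟩
      · exact hg
      · rcases Sym2.eq_iff.1 heq with ⟨rfl, rfl⟩ | ⟨rfl, rfl⟩
        · exact absurd hxy hab'
        · exact absurd hxy.symm hab'
    exact le_csSup (TrussAux.trussSet_bddAbove G e')
      ⟨TrussAux.trans H' hdesc, TrussAux.trans_isTruss H' hdesc hT', heH'⟩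
  · by_contra hk
    push_neg at hk
    obtain ⟨hconn', hne', hsupp'⟩ := hT'
    have hCn := hsupp' a b hab'
    have hCne : ({c : V | H'.Adj a c ∧ H'.Adj b c}).ncard ≠ 0 := by omega
    obtain ⟨c₀, hac₀, hbc₀⟩ := Set.nonempty_of_ncard_ne_zero hCne
    have hsideG : ∀ c : V, H'.Adj a c → H'.Adj b c → G.Adj a c ∧ G.Adj b c := by
      intro c h1 h2
      have hac : a ≠ c := (H'.adj_sub h1).ne
      have hbc : b ≠ c := (H'.adj_sub h2).ne
      constructor
      · rcases (hG'adj a c).1 (H'.adj_sub h1) with hg | ⟨heq, -⟩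
        · exact hg
        · rcases Sym2.eq_iff.1 heq with ⟨-, rfl⟩ | ⟨rfl, rfl⟩
          · exact absurd rfl hbc
          · exact absurd rfl hab
      · rcases (hG'adj b c).1 (H'.adj_sub h2) with hg | ⟨heq, -⟩
        · exact hg
        · rcases Sym2.eq_iff.1 heq with ⟨rfl, rfl⟩ | ⟨-, rfl⟩
          · exact absurd rfl hab
          · exact absurd rfl hac
    have hsideTruss : ∀ c : V, H'.Adj a c → H'.Adj b c → ∀ e'' : Sym2 V,
        e'' = s(a, c) ∨ e'' = s(b, c) →
        ∃ K : G.Subgraph, IsTruss G (t + 1) K ∧ e'' ∈ K.edgeSet := by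
      intro c h1 h2 e'' he''
      obtain ⟨hga, hgb⟩ := hsideG c h1 h2
      have hmem : e'' ∈ sideEdges G a b := ⟨c, hga, hgb, he''⟩
      have h1' : kmin G a b ≤ trussNumber G e'' :=
        csInf_le (OrderBot.bddBelow _) (Set.mem_image_of_mem _ hmem)
      have hedge : e'' ∈ G.edgeSet := by rcases he'' with rfl | rfl; exacts [hga, hgb]
      obtain ⟨K, hK, heK⟩ := TrussAux.exists_truss hedge
      exact ⟨K, TrussAux.isTruss_mono_k (by omega) hK, heK⟩
    set 𝒦 : Set G.Subgraph := {K | IsTruss G (t + 1) K ∧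
      ∃ c : V, H'.Adj a c ∧ H'.Adj b c ∧ (s(a, c) ∈ K.edgeSet ∨ s(b, c) ∈ K.edgeSet)} with h𝒦
    have hKmemA : ∀ c : V, H'.Adj a c → H'.Adj b c → ∃ K ∈ 𝒦, K.Adj a c := by
      intro c h1 h2
      obtain ⟨K, hK, heK⟩ := hsideTruss c h1 h2 s(a, c) (Or.inl rfl)
      exact ⟨K, ⟨hK, c, h1, h2, Or.inl heK⟩, SimpleGraph.Subgraph.mem_edgeSet.1 heK⟩
    have hKmemB : ∀ c : V, H'.Adj a c → H'.Adj b c → ∃ K ∈ 𝒦, K.Adj b c := by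
      intro c h1 h2
      obtain ⟨K, hK, heK⟩ := hsideTruss c h1 h2 s(b, c) (Or.inr rfl)
      exact ⟨K, ⟨hK, c, h1, h2, Or.inr heK⟩, SimpleGraph.Subgraph.mem_edgeSet.1 heK⟩
    have hdesc0 : ∀ x y, (H'.deleteEdges {s(a, b)}).Adj x y → G.Adj x y := by
      intro x y hxy
      rw [SimpleGraph.Subgraph.deleteEdges_adj] at hxy
      obtain ⟨hxy1, hxy2⟩ := hxy
      rcases (hG'adj x y).1 (H'.adj_sub hxy1) with hg | ⟨heq, -⟩
      · exact hg
      · exact absurd (Set.mem_singleton_iff.2 heq) hxy2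
    set H₀ : G.Subgraph := TrussAux.trans (H'.deleteEdges {s(a, b)}) hdesc0 with hH₀
    set B : G.Subgraph := H₀ ⊔ sSup 𝒦 with hB
    have hKleB : ∀ K ∈ 𝒦, K ≤ B := fun K hK => le_trans (le_sSup hK) le_sup_right
    have hH₀adj : ∀ x y : V, H'.Adj x y → s(x, y) ≠ s(a, b) → H₀.Adj x y := by
      intro x y h1 h2
      rw [hH₀, TrussAux.trans_adj, SimpleGraph.Subgraph.deleteEdges_adj]
      exact ⟨h1, by simpa using h2⟩
    have hBadj : ∀ x y : V, H'.Adj x y → s(x, y) ≠ s(a, b) → B.Adj x y := by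
      intro x y h1 h2
      exact SimpleGraph.Subgraph.sup_adj.2 (Or.inl (hH₀adj x y h1 h2))
    have hBsupp : ∀ x y : V, B.Adj x y →
        t + 1 - 2 ≤ ({c : V | B.Adj x c ∧ B.Adj y c}).ncard := by
      have hKcase : ∀ (K : G.Subgraph), K ∈ 𝒦 → ∀ x y : V, K.Adj x y →
          t + 1 - 2 ≤ ({c : V | B.Adj x c ∧ B.Adj y c}).ncard := by
        intro K hK x y hxy
        refine le_trans (hK.1.2.2 x y hxy) (Set.ncard_le_ncard ?_ (Set.toFinite _))
        rintro c ⟨hc1, hc2⟩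
        exact ⟨(hKleB K hK).2 hc1, (hKleB K hK).2 hc2⟩
      intro x y hxy
      rcases SimpleGraph.Subgraph.sup_adj.1 hxy with h0 | hs
      · by_cases hex : ∃ K ∈ 𝒦, K.Adj x y
        · obtain ⟨K, hK, hKxy⟩ := hex
          exact hKcase K hK x y hKxy
        · have h0' : H'.Adj x y ∧ s(x, y) ∉ ({s(a, b)} : Set (Sym2 V)) := by
            rw [hH₀, TrussAux.trans_adj, SimpleGraph.Subgraph.deleteEdges_adj] at h0
            exact h0
          have hsupN := hsupp' x y h0'.1
          have hsub : {c : V | H'.Adj x c ∧ H'.Adj y c} ⊆ {c : V | B.Adj x c ∧ B.Adj y c} := by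
            rintro c ⟨h1, h2⟩
            constructor
            · by_cases hc : s(x, c) = s(a, b)
              · exfalso
                rcases Sym2.eq_iff.1 hc with ⟨rfl, rfl⟩ | ⟨rfl, rfl⟩
                · obtain ⟨K, hK, hKxy⟩ := hKmemA y h0'.1 h2.symm
                  exact hex ⟨K, hK, hKxy⟩
                · obtain ⟨K, hK, hKxy⟩ := hKmemB y h2.symm h0'.1
                  exact hex ⟨K, hK, hKxy⟩
              · exact hBadj x c h1 hc
            · by_cases hc : s(y, c) = s(a, b)
              · exfalso
                rcases Sym2.eq_iff.1 hc with ⟨rfl, rfl⟩ | ⟨rfl, rfl⟩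
                · obtain ⟨K, hK, hKxy⟩ := hKmemA x h0'.1.symm h1.symm
                  exact hex ⟨K, hK, hKxy.symm⟩
                · obtain ⟨K, hK, hKxy⟩ := hKmemB x h1.symm h0'.1.symm
                  exact hex ⟨K, hK, hKxy.symm⟩
              · exact hBadj y c h2 hc
          have hcard := Set.ncard_le_ncard hsub (Set.toFinite _)
          omega
      · obtain ⟨K, hK, hKxy⟩ := SimpleGraph.Subgraph.sSup_adj.1 hs
        exact hKcase K hK x y hKxy
    have haB : a ∈ B.verts := by
      rw [hB, SimpleGraph.Subgraph.verts_sup]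
      exact Set.mem_union_left _ (H'.edge_vert hab')
    have hbB : b ∈ B.verts := by
      rw [hB, SimpleGraph.Subgraph.verts_sup]
      exact Set.mem_union_left _ (H'.edge_vert hab'.symm)
    obtain ⟨Ka, hKa, hKaAdj⟩ := hKmemA c₀ hac₀ hbc₀
    obtain ⟨Kb, hKb, hKbAdj⟩ := hKmemB c₀ hac₀ hbc₀
    have hBac₀ : B.Adj a c₀ := (hKleB Ka hKa).2 hKaAdj
    have hBbc₀ : B.Adj b c₀ := (hKleB Kb hKb).2 hKbAdj
    have hwalkab : ∃ q : G.Walk a b, q.toSubgraph ≤ B := by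
      refine ⟨SimpleGraph.Walk.cons (B.adj_sub hBac₀)
        (SimpleGraph.Walk.cons (B.adj_sub hBbc₀).symm .nil), ?_⟩
      simp only [SimpleGraph.Walk.toSubgraph]
      refine sup_le ?_ (sup_le ?_ ?_)
      · exact SimpleGraph.subgraphOfAdj_le_of_adj B hBac₀
      · exact SimpleGraph.subgraphOfAdj_le_of_adj B hBbc₀.symm
      · rw [SimpleGraph.singletonSubgraph_le_iff]
        exact hbB
    have hedgeB : ∀ x y : V, H'.Adj x y → ∃ q : G.Walk x y, q.toSubgraph ≤ B := by
      intro x y hxy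
      by_cases hc : s(x, y) = s(a, b)
      · obtain ⟨q, hq⟩ := hwalkab
        rcases Sym2.eq_iff.1 hc with ⟨rfl, rfl⟩ | ⟨rfl, rfl⟩
        · exact ⟨q, hq⟩
        · exact ⟨q.reverse, by rwa [SimpleGraph.Walk.toSubgraph_reverse]⟩
      · have hBxy := hBadj x y hxy hc
        refine ⟨SimpleGraph.Walk.cons (B.adj_sub hBxy) .nil, ?_⟩
        simp only [SimpleGraph.Walk.toSubgraph]
        refine sup_le (SimpleGraph.subgraphOfAdj_le_of_adj B hBxy) ?_
        rw [SimpleGraph.singletonSubgraph_le_iff]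
        exact B.edge_vert hBxy.symm
    have hvertsub : H'.verts ⊆ B.verts := by
      rw [hB, SimpleGraph.Subgraph.verts_sup]
      intro v hv
      exact Set.mem_union_left _ hv
    have hbase : ∀ v ∈ B.verts, ∃ q : G.Walk v a, q.toSubgraph ≤ B := by
      intro v hv
      rw [hB, SimpleGraph.Subgraph.verts_sup] at hv
      rcases hv with hv | hv
      · obtain ⟨p, hp⟩ := (SimpleGraph.Subgraph.preconnected_iff_forall_exists_walk_subgraph H').1
          hconn'.preconnected hv (H'.edge_vert hab')
        exact TrussAux.walk_transfer hvertsub hedgeB p hp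
      · rw [SimpleGraph.Subgraph.verts_sSup] at hv
        simp only [Set.mem_iUnion] at hv
        obtain ⟨K, hK, hvK⟩ := hv
        have hKle := hKleB K hK
        have hKpre := hK.1.1.preconnected
        obtain ⟨-, c, -, -, hedge⟩ := hK
        rcases hedge with hea | heb
        · have haK : a ∈ K.verts := K.edge_vert (SimpleGraph.Subgraph.mem_edgeSet.1 hea)
          obtain ⟨p, hp⟩ :=
            (SimpleGraph.Subgraph.preconnected_iff_forall_exists_walk_subgraph K).1 hKpre hvK haK
          exact ⟨p, le_trans hp hKle⟩
        · have hbK : b ∈ K.verts := K.edge_vert (SimpleGraph.Subgraph.mem_edgeSet.1 heb)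
          obtain ⟨p, hp⟩ :=
            (SimpleGraph.Subgraph.preconnected_iff_forall_exists_walk_subgraph K).1 hKpre hvK hbK
          obtain ⟨q, hq⟩ := hwalkab
          refine ⟨p.append q.reverse, ?_⟩
          rw [SimpleGraph.Walk.toSubgraph_append, SimpleGraph.Walk.toSubgraph_reverse]
          exact sup_le (le_trans hp hKle) hq
    have hBconn : B.Connected := by
      rw [SimpleGraph.Subgraph.connected_iff_forall_exists_walk_subgraph]
      refine ⟨⟨a, haB⟩, ?_⟩
      intro u v hu hv
      obtain ⟨q1, hq1⟩ := hbase u hu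
      obtain ⟨q2, hq2⟩ := hbase v hv
      refine ⟨q1.append q2.reverse, ?_⟩
      rw [SimpleGraph.Walk.toSubgraph_append, SimpleGraph.Walk.toSubgraph_reverse]
      exact sup_le hq1 hq2
    have hne : e' ≠ s(a, b) := by
      rintro rfl
      exact hnadj he'
    have he'B : e' ∈ B.edgeSet := by
      revert heH' hne
      refine Sym2.ind (fun x y hxy hne => ?_) e'
      exact SimpleGraph.Subgraph.mem_edgeSet.2
        (hBadj x y (SimpleGraph.Subgraph.mem_edgeSet.1 hxy) hne)
    have hmem : t + 1 ∈ {k : ℕ | ∃ H : G.Subgraph, IsTruss G k H ∧ e' ∈ H.edgeSet} :=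
      ⟨B, ⟨hBconn, ⟨e', he'B⟩, hBsupp⟩, he'B⟩
    have hfin : t + 1 ≤ t := le_csSup (TrussAux.trussSet_bddAbove G e') hmem
    omega
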